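/- arXiv:2603.04618 — 6 statements merged into one kernel-verified Lean document; each statement's English description precedes it below -/
import Mathlib

section
/- (Theorem 1, finite temperature.) Let L be a set of density matrices on ℂ^d, let Y be a d×d positive semidefinite matrix such that Re Tr[Yσ] ≤ 1 for every σ ∈ L, and let ρ be a density matrix with R := Re Tr[Yρ] − 1 > 0. Fix β > 0 and λ > 0 with λ·β·R ≥ S(ρ). Let H = λ·Y, let τ = τ_H^β be the thermal state, and for a density matrix χ define the extractable work W(χ) = F_H(χ) − F_H(τ). Then for every σ ∈ L, (λ + β⁻¹·S(τ)) · W(ρ) ≥ (λ·(1+R) + β⁻¹·(S(τ) − S(ρ))) · W(σ). (Equivalently, the work-extraction advantage satisfies W(ρ)/W(σ) ≥ 1 + (R − λ⁻¹β⁻¹S(ρ))/(1 + λ⁻¹β⁻¹S(τ)).) -/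
open Matrix ComplexOrder

/-- A density matrix: positive semidefinite with unit trace. -/
def IsDensityMatrix {n : Type*} [Fintype n] (ρ : Matrix n n ℂ) : Prop :=
  ρ.PosSemidef ∧ ρ.trace = 1

/-- The von Neumann entropy `S(ρ) = -∑ᵢ λᵢ log λᵢ` of a Hermitian matrix,
computed from its eigenvalues (junk value `0` for non-Hermitian matrices). -/
noncomputable def vnEntropy {n : Type*} [Fintype n] [DecidableEq n]
    (ρ : Matrix n n ℂ) : ℝ :=
  if h : ρ.IsHermitian then ∑ i, -(h.eigenvalues i * Real.log (h.eigenvalues i)) else 0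

/-- The thermal (Gibbs) state `exp(-βH)/Tr[exp(-βH)]`. -/
noncomputable def thermalState {n : Type*} [Fintype n] [DecidableEq n]
    (β : ℝ) (H : Matrix n n ℂ) : Matrix n n ℂ :=
  ((NormedSpace.exp (-(β : ℂ) • H)).trace)⁻¹ • NormedSpace.exp (-(β : ℂ) • H)

/-- The free energy `F_H(ρ) = Re Tr[Hρ] - β⁻¹ S(ρ)`. -/
noncomputable def freeEnergy {n : Type*} [Fintype n] [DecidableEq n]
    (β : ℝ) (H ρ : Matrix n n ℂ) : ℝ :=
  ((H * ρ).trace).re - β⁻¹ * vnEntropy ρ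

section Aux
set_option linter.unusedVariables false
variable {d : ℕ}

lemma star_mul_self_one {A : Matrix (Fin d) (Fin d) ℂ} (hA : A.IsHermitian) :
    star (hA.eigenvectorUnitary : Matrix (Fin d) (Fin d) ℂ) * (hA.eigenvectorUnitary : Matrix (Fin d) (Fin d) ℂ) = 1 :=
  Matrix.mem_unitaryGroup_iff'.mp hA.eigenvectorUnitary.2

lemma trace_eq_sum_ev {A : Matrix (Fin d) (Fin d) ℂ} (hA : A.IsHermitian) :
    A.trace = ∑ i, (hA.eigenvalues i : ℂ) := by
  conv_lhs => rw [hA.spectral_theorem, Unitary.conjStarAlgAut_apply]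
  rw [Matrix.trace_mul_cycle, star_mul_self_one hA, Matrix.one_mul,
    Matrix.trace_diagonal]
  rfl

lemma vnEntropy_nonneg {ρ : Matrix (Fin d) (Fin d) ℂ} (h : IsDensityMatrix ρ) :
    0 ≤ vnEntropy ρ := by
  have hH := h.1.1
  rw [vnEntropy, dif_pos hH]
  have hsum : ∑ i, hH.eigenvalues i = 1 := by
    have h1 := trace_eq_sum_ev hH
    rw [h.2] at h1
    exact_mod_cast h1.symm
  refine Finset.sum_nonneg fun i _ => ?_
  have h0 : 0 ≤ hH.eigenvalues i := h.1.eigenvalues_nonneg i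
  have h1 : hH.eigenvalues i ≤ 1 := hsum ▸
    Finset.single_le_sum (fun j _ => h.1.eigenvalues_nonneg j) (Finset.mem_univ i)
  have hl := Real.log_nonpos h0 h1
  nlinarith

lemma exp_real_smul {A : Matrix (Fin d) (Fin d) ℂ} (hA : A.IsHermitian) (c : ℝ) :
    NormedSpace.exp ((c : ℂ) • A) =
      (hA.eigenvectorUnitary : Matrix (Fin d) (Fin d) ℂ) *
        Matrix.diagonal (fun i => (Real.exp (c * hA.eigenvalues i) : ℂ)) *
        star (hA.eigenvectorUnitary : Matrix (Fin d) (Fin d) ℂ) := by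
  set U : Matrix (Fin d) (Fin d) ℂ := (hA.eigenvectorUnitary : Matrix (Fin d) (Fin d) ℂ) with hU
  have hU2 : star U * U = 1 := star_mul_self_one hA
  have hU1 : U * star U = 1 := Matrix.mem_unitaryGroup_iff.mp hA.eigenvectorUnitary.2
  have hUinv : U⁻¹ = star U := Matrix.inv_eq_right_inv hU1
  have hUnit : IsUnit U := isUnit_iff_exists.mpr ⟨star U, hU1, hU2⟩
  have hstep : (c : ℂ) • A =
      U * Matrix.diagonal (fun i => (c : ℂ) * (hA.eigenvalues i : ℂ)) * U⁻¹ := by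
    have hD : Matrix.diagonal (fun i => (c : ℂ) * (hA.eigenvalues i : ℂ)) =
        (c : ℂ) • Matrix.diagonal (RCLike.ofReal ∘ hA.eigenvalues) := by
      rw [← Matrix.diagonal_smul]
      congr 1
    rw [hUinv, hD]
    conv_lhs => rw [hA.spectral_theorem, Unitary.conjStarAlgAut_apply]
    rw [mul_smul_comm, smul_mul_assoc]
  have hfun : (NormedSpace.exp fun i => (c : ℂ) * (hA.eigenvalues i : ℂ)) =
      fun i => (Real.exp (c * hA.eigenvalues i) : ℂ) := by
    funext i
    rw [Pi.exp_def, ← Complex.exp_eq_exp_ℂ]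
    simp [Complex.ofReal_exp, Complex.ofReal_mul]
  rw [hstep, Matrix.exp_conj _ _ hUnit, Matrix.exp_diagonal, hfun, hUinv]

lemma thermal_key [Nonempty (Fin d)] {Y : Matrix (Fin d) (Fin d) ℂ} (hY : Y.PosSemidef)
    {β lam : ℝ} (hβ : 0 < β) (hlam : 0 < lam) :
    IsDensityMatrix (thermalState β ((lam : ℂ) • Y)) ∧
      0 ≤ ((Y * thermalState β ((lam : ℂ) • Y)).trace).re := by
  have hA := hY.1
  set c : ℝ := -(β * lam) with hc
  set U : Matrix (Fin d) (Fin d) ℂ := (hA.eigenvectorUnitary : Matrix (Fin d) (Fin d) ℂ) with hUdef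
  set r : Fin d → ℝ := fun i => Real.exp (c * hA.eigenvalues i) with hrdef
  have hr : ∀ i, 0 < r i := fun i => Real.exp_pos _
  set Z : ℝ := ∑ i, r i with hZdef
  have hZ : 0 < Z := Finset.sum_pos (fun i _ => hr i) Finset.univ_nonempty
  have hsmul : -(β : ℂ) • ((lam : ℂ) • Y) = ((c : ℂ)) • Y := by
    rw [smul_smul]
    congr 1
    rw [hc]
    push_cast
    ring
  have hE : NormedSpace.exp (-(β : ℂ) • ((lam : ℂ) • Y)) =
      U * Matrix.diagonal (fun i => (r i : ℂ)) * star U := by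
    rw [hsmul, exp_real_smul hA c]
  have htrE : (NormedSpace.exp (-(β : ℂ) • ((lam : ℂ) • Y))).trace = (Z : ℂ) := by
    rw [hE, Matrix.trace_mul_cycle, star_mul_self_one hA, Matrix.one_mul,
      Matrix.trace_diagonal]
    rw [hZdef]
    push_cast
    rfl
  have hτ : thermalState β ((lam : ℂ) • Y) =
      U * Matrix.diagonal (fun i => ((Z⁻¹ * r i : ℝ) : ℂ)) * star U := by
    rw [thermalState, htrE, hE]
    have hD : Matrix.diagonal (fun i => ((Z⁻¹ * r i : ℝ) : ℂ)) =
        ((Z : ℂ))⁻¹ • Matrix.diagonal (fun i => (r i : ℂ)) := by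
      funext i j
      rcases eq_or_ne i j with rfl | hij
      · simp [Matrix.diagonal_apply_eq, Matrix.smul_apply, smul_eq_mul]
      · simp [Matrix.diagonal_apply_ne _ hij, Matrix.smul_apply, hij]
    rw [hD, mul_smul_comm, smul_mul_assoc]
  have hPSD : (thermalState β ((lam : ℂ) • Y)).PosSemidef := by
    rw [hτ, Matrix.star_eq_conjTranspose U]
    exact (Matrix.posSemidef_diagonal_iff.mpr fun i =>
      Complex.zero_le_real.mpr (by positivity)).mul_mul_conjTranspose_same U
  have htr1 : (thermalState β ((lam : ℂ) • Y)).trace = 1 := by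
    rw [hτ, Matrix.trace_mul_cycle, star_mul_self_one hA, Matrix.one_mul,
      Matrix.trace_diagonal]
    have hs : ∑ i, Z⁻¹ * r i = 1 := by
      rw [← Finset.mul_sum, ← hZdef]
      field_simp
    calc (∑ i, ((Z⁻¹ * r i : ℝ) : ℂ)) = ((∑ i, Z⁻¹ * r i : ℝ) : ℂ) := by push_cast; rfl
      _ = 1 := by rw [hs]; norm_num
  have hYτ : ((Y * thermalState β ((lam : ℂ) • Y)).trace).re
      = ∑ i, hA.eigenvalues i * (Z⁻¹ * r i) := by
    rw [hτ]
    have hassoc : Y * (U * Matrix.diagonal (fun i => ((Z⁻¹ * r i : ℝ) : ℂ)) * star U)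
        = (Y * U) * Matrix.diagonal (fun i => ((Z⁻¹ * r i : ℝ) : ℂ)) * star U := by
      simp [Matrix.mul_assoc]
    rw [hassoc, Matrix.trace_mul_cycle, ← Matrix.mul_assoc,
      (show star U * Y * U = Matrix.diagonal (RCLike.ofReal ∘ hA.eigenvalues) by
        simpa [Unitary.conjStarAlgAut_star_apply] using hA.conjStarAlgAut_star_eigenvectorUnitary),
      Matrix.diagonal_mul_diagonal, Matrix.trace_diagonal]
    push_cast
    simp [Function.comp]
  refine ⟨⟨hPSD, htr1⟩, ?_⟩
  rw [hYτ]
  exact Finset.sum_nonneg fun i _ => mul_nonneg (hY.eigenvalues_nonneg i)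
    (mul_nonneg (le_of_lt (inv_pos.mpr hZ)) (hr i).le)

lemma algebra_step (b lam R Sρ Sσ Sτ aσ aτ : ℝ)
    (hb : 0 < b) (hlam : 0 < lam) (hSτ : 0 ≤ Sτ) (hSσ : 0 ≤ Sσ)
    (haσ : aσ ≤ lam) (haτ : 0 ≤ aτ) (hc : b * Sρ ≤ lam * R) :
    (lam + b * Sτ) * ((lam * (1 + R) - b * Sρ) - (aτ - b * Sτ)) ≥
      (lam * (1 + R) + b * (Sτ - Sρ)) * ((aσ - b * Sσ) - (aτ - b * Sτ)) := by
  have hbσ : 0 ≤ b * Sσ := mul_nonneg hb.le hSσ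
  have hbτ : 0 ≤ b * Sτ := mul_nonneg hb.le hSτ
  nlinarith [mul_nonneg (by linarith : (0:ℝ) ≤ lam + b * Sτ)
      (by linarith : (0:ℝ) ≤ lam - aσ + b * Sσ),
    mul_nonneg (by linarith : (0:ℝ) ≤ lam * R - b * Sρ)
      (by linarith : (0:ℝ) ≤ lam - aσ + b * Sσ + aτ)]

end Aux

/-- Theorem 1, finite temperature: with witness Hamiltonian `H = λY`, the work
extractable from the resource state `ρ` exceeds that of any free state `σ` by at
least the factor `1 + (R − λ⁻¹β⁻¹S(ρ))/(1 + λ⁻¹β⁻¹S(τ))`, stated in a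
cross-multiplied form. -/
theorem work_advantage_finite_temperature {d : ℕ}
    (L : Set (Matrix (Fin d) (Fin d) ℂ)) (hL : ∀ σ ∈ L, IsDensityMatrix σ)
    (Y ρ : Matrix (Fin d) (Fin d) ℂ)
    (hY : Y.PosSemidef)
    (hWitness : ∀ σ ∈ L, ((Y * σ).trace).re ≤ 1)
    (hρ : IsDensityMatrix ρ)
    (hR : 0 < ((Y * ρ).trace).re - 1)
    (β lam : ℝ) (hβ : 0 < β) (hlam : 0 < lam)
    (hcond : vnEntropy ρ ≤ lam * β * (((Y * ρ).trace).re - 1)) :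
    ∀ σ ∈ L,
      (lam + β⁻¹ * vnEntropy (thermalState β ((lam : ℂ) • Y))) *
          (freeEnergy β ((lam : ℂ) • Y) ρ - freeEnergy β ((lam : ℂ) • Y) (thermalState β ((lam : ℂ) • Y))) ≥
        (lam * (1 + (((Y * ρ).trace).re - 1)) +
            β⁻¹ * (vnEntropy (thermalState β ((lam : ℂ) • Y)) - vnEntropy ρ)) *
          (freeEnergy β ((lam : ℂ) • Y) σ - freeEnergy β ((lam : ℂ) • Y) (thermalState β ((lam : ℂ) • Y))) := by
  intro σ hσ
  have hd : Nonempty (Fin d) := by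
    rcases Nat.eq_zero_or_pos d with h0 | h0
    · exfalso
      have := hρ.2
      subst h0
      simp [Matrix.trace] at this
    · exact ⟨⟨0, h0⟩⟩
  obtain ⟨hτdm, hYτ⟩ := thermal_key hY hβ hlam
  set τ := thermalState β ((lam : ℂ) • Y) with hτdef
  have hSτ : 0 ≤ vnEntropy τ := vnEntropy_nonneg hτdm
  have hSσ : 0 ≤ vnEntropy σ := vnEntropy_nonneg (hL σ hσ)
  have hsm : ∀ χ : Matrix (Fin d) (Fin d) ℂ,
      ((((lam : ℂ) • Y) * χ).trace).re = lam * ((Y * χ).trace).re := by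
    intro χ
    rw [Matrix.smul_mul, Matrix.trace_smul]
    exact Complex.re_ofReal_mul lam _
  have hb : 0 < β⁻¹ := inv_pos.mpr hβ
  have hc : β⁻¹ * vnEntropy ρ ≤ lam * (((Y * ρ).trace).re - 1) := by
    have h1 : β⁻¹ * vnEntropy ρ ≤ β⁻¹ * (lam * β * (((Y * ρ).trace).re - 1)) :=
      mul_le_mul_of_nonneg_left hcond hb.le
    have h2 : β⁻¹ * (lam * β * (((Y * ρ).trace).re - 1))
        = lam * (((Y * ρ).trace).re - 1) := by
      field_simp
    linarith
  have haσ : ((((lam : ℂ) • Y) * σ).trace).re ≤ lam := by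
    rw [hsm σ]
    nlinarith [hWitness σ hσ]
  have haτ : 0 ≤ ((((lam : ℂ) • Y) * τ).trace).re := by
    rw [hsm τ]
    exact mul_nonneg hlam.le hYτ
  have haρ : ((((lam : ℂ) • Y) * ρ).trace).re
      = lam * (1 + (((Y * ρ).trace).re - 1)) := by
    rw [hsm ρ]
    ring
  simp only [freeEnergy, haρ]
  exact algebra_step β⁻¹ lam (((Y * ρ).trace).re - 1) (vnEntropy ρ) (vnEntropy σ)
    (vnEntropy τ) ((((lam : ℂ) • Y) * σ).trace).re ((((lam : ℂ) • Y) * τ).trace).re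
    hb hlam hSτ hSσ haσ haτ hc
end

section
/- (Core inequality of Theorem 2.) Let d ≥ 2, let y ∈ ℂ^d be a unit vector, let a ≥ 0, and set τ = (I − (1 − e^{−a}) · y y†) / (d − 1 + e^{−a}) (the thermal state of a rank-one Hamiltonian). Then for every d×d positive semidefinite matrix Z with Re Tr[Z] ≤ d (i.e., any robustness witness compatible with the maximally mixed state being free), Re Tr[Z τ] − 1 ≤ 1/(d − 1). -/
open Matrix ComplexOrder

lemma trace_mul_vecMulVec {d : ℕ} (Z : Matrix (Fin d) (Fin d) ℂ) (y : Fin d → ℂ) :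
    (Z * vecMulVec y (star y)).trace = star y ⬝ᵥ Z *ᵥ y := by
  simp only [Matrix.trace, Matrix.diag, Matrix.mul_apply, Matrix.vecMulVec_apply,
    dotProduct, Matrix.mulVec, Pi.star_apply, Finset.mul_sum]
  refine Finset.sum_congr rfl fun i _ => Finset.sum_congr rfl fun j _ => ?_
  ring

/-- Core inequality of Theorem 2: for the thermal state `τ` of a rank-one
Hamiltonian and any positive semidefinite witness `Z` with `Re Tr[Z] ≤ d`
(feasibility when the maximally mixed state is free), the witness value on `τ`
is at most `1/(d−1)` above `1`. -/
theorem thermal_state_witness_bound {d : ℕ} (hd : 2 ≤ d)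
    (y : Fin d → ℂ) (hy : ∑ j, ‖y j‖ ^ 2 = 1) (a : ℝ) (ha : 0 ≤ a)
    (Z : Matrix (Fin d) (Fin d) ℂ) (hZ : Z.PosSemidef)
    (hZtr : (Z.trace).re ≤ d) :
    ((Z * ((((d : ℂ) - 1 + (Real.exp (-a) : ℝ))⁻¹) •
        (1 - ((1 - Real.exp (-a) : ℝ) : ℂ) • vecMulVec y (star y)))).trace).re - 1 ≤
      1 / (d - 1) := by
  set s : ℝ := Real.exp (-a) with hs
  have hs0 : 0 < s := Real.exp_pos _
  have hs1 : s ≤ 1 := Real.exp_le_one_iff.mpr (by linarith)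
  have hd1 : (1 : ℝ) ≤ (d : ℝ) - 1 := by
    have : (2 : ℝ) ≤ (d : ℝ) := by exact_mod_cast hd
    linarith
  have hc0 : (0 : ℝ) < (d : ℝ) - 1 + s := by linarith
  have hq := hZ.dotProduct_mulVec_nonneg y
  have hqre : 0 ≤ (star y ⬝ᵥ Z *ᵥ y).re := by
    rw [Complex.le_def] at hq; simpa using hq.1
  set q : ℂ := star y ⬝ᵥ Z *ᵥ y with hqdef
  have hcoe : ((d : ℂ) - 1 + (s : ℂ)) = (((d : ℝ) - 1 + s : ℝ) : ℂ) := by push_cast; ring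
  have htr : (Z * ((((d : ℂ) - 1 + (s : ℝ))⁻¹) •
        (1 - ((1 - s : ℝ) : ℂ) • vecMulVec y (star y)))).trace
      = (((d : ℝ) - 1 + s : ℝ) : ℂ)⁻¹ * (Z.trace - ((1 - s : ℝ) : ℂ) * q) := by
    rw [Matrix.mul_smul, Matrix.trace_smul, Matrix.mul_sub, Matrix.mul_one, Matrix.mul_smul,
      Matrix.trace_sub, Matrix.trace_smul, trace_mul_vecMulVec, hcoe]
    simp [smul_eq_mul, hqdef]
  rw [htr]
  have hre : ((((d : ℝ) - 1 + s : ℝ) : ℂ)⁻¹ * (Z.trace - ((1 - s : ℝ) : ℂ) * q)).re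
      = ((d : ℝ) - 1 + s)⁻¹ * (Z.trace.re - (1 - s) * q.re) := by
    rw [← Complex.ofReal_inv]
    simp only [Complex.mul_re, Complex.sub_re, Complex.sub_im, Complex.ofReal_re,
      Complex.ofReal_im]
    ring
  rw [hre]
  have hdr : (0:ℝ) < (d:ℝ) - 1 := by linarith
  rw [div_eq_mul_inv, one_mul, sub_le_iff_le_add, inv_mul_le_iff₀ hc0]
  nlinarith [mul_inv_cancel₀ hdr.ne', mul_pos hs0 (inv_pos.mpr hdr),
    mul_nonneg (sub_nonneg.mpr hs1) hqre]
end

section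
/- (Theorem 2: near-total resource depletion after optimal work extraction.) Let d ≥ 2, let y ∈ ℂ^d be a unit vector, let a ≥ 0, and set τ = (I − (1 − e^{−a}) · y y†) / (d − 1 + e^{−a}) (the thermal state of a rank-one Hamiltonian). Let L' be any set of density matrices on ℂ^d that contains the maximally mixed state I/d. Then the generalized robustness satisfies R_{L'}(τ) ≤ 1/(d − 1). -/
open Matrix ComplexOrder

/-- The generalized robustness of `ρ` with respect to the free set `L`. -/
noncomputable def robustness {n : Type*} [Fintype n]
    (L : Set (Matrix n n ℂ)) (ρ : Matrix n n ℂ) : ℝ :=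
  sInf { s : ℝ | 0 ≤ s ∧ ∃ γ : Matrix n n ℂ, IsDensityMatrix γ ∧
    (1 + s)⁻¹ • (ρ + s • γ) ∈ L }

lemma psd_smul_real {n : Type*} [Fintype n] {M : Matrix n n ℂ} (hM : M.PosSemidef)
    {r : ℝ} (hr : 0 ≤ r) : ((r : ℂ) • M).PosSemidef := by
  constructor
  · show _ = _
    rw [conjTranspose_smul, hM.1.eq, Complex.star_def, Complex.conj_ofReal]
  · intro x
    exact (hM.smul (by exact_mod_cast hr : (0 : ℂ) ≤ (r : ℂ))).2 x

lemma psd_vmv {n : Type*} [Fintype n] (y : n → ℂ) :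
    (vecMulVec y (star y)).PosSemidef := by
  rw [vecMulVec_eq Unit, ← conjTranspose_replicateCol]
  exact posSemidef_self_mul_conjTranspose _

lemma trace_vmv {n : Type*} [Fintype n] (y : n → ℂ) :
    (vecMulVec y (star y)).trace = ((∑ j, ‖y j‖ ^ 2 : ℝ) : ℂ) := by
  push_cast
  simp [Matrix.trace, Matrix.diag, vecMulVec_apply, Complex.mul_conj',
    Complex.mul_conj, Complex.sq_norm, Complex.normSq_eq_norm_sq]

/-- Theorem 2: after optimal work extraction, the system ends in the thermal
state `τ` of a rank-one Hamiltonian, and with respect to any resource theory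
whose free set `L'` contains the maximally mixed state, the remaining
robustness of `τ` is at most `1/(d−1)`. -/
theorem resource_depletion_after_work_extraction {d : ℕ} (hd : 2 ≤ d)
    (y : Fin d → ℂ) (hy : ∑ j, ‖y j‖ ^ 2 = 1) (a : ℝ) (ha : 0 ≤ a)
    (L' : Set (Matrix (Fin d) (Fin d) ℂ)) (hL' : ∀ σ ∈ L', IsDensityMatrix σ)
    (hmm : ((d : ℂ))⁻¹ • (1 : Matrix (Fin d) (Fin d) ℂ) ∈ L') :
    robustness L'
        ((((d : ℂ) - 1 + (Real.exp (-a) : ℝ))⁻¹) •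
          (1 - ((1 - Real.exp (-a) : ℝ) : ℂ) • vecMulVec y (star y))) ≤
      1 / (d - 1) := by
  set e : ℝ := Real.exp (-a) with he
  have he0 : 0 < e := Real.exp_pos _
  have he1 : e ≤ 1 := by
    rw [he]
    calc Real.exp (-a) ≤ Real.exp 0 := Real.exp_le_exp.mpr (by linarith)
    _ = 1 := Real.exp_zero
  have hd1 : (1 : ℝ) ≤ (d : ℝ) - 1 := by
    have : (2 : ℝ) ≤ (d : ℝ) := by exact_mod_cast hd
    linarith
  set ce : ℝ := (d : ℝ) - 1 + e with hcedef
  have hce : 0 < ce := by positivity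
  set s : ℝ := 1 / ((d : ℝ) - 1) with hsdef
  have hs : 0 ≤ s := by positivity
  set P := vecMulVec y (star y) with hP
  set γ : Matrix (Fin d) (Fin d) ℂ :=
    ((e / ce : ℝ) : ℂ) • 1 + ((((d : ℝ) - 1) * (1 - e) / ce : ℝ) : ℂ) • P with hγ
  have hγpsd : γ.PosSemidef := by
    refine (psd_smul_real PosSemidef.one (by positivity)).add
      (psd_smul_real (psd_vmv y) ?_)
    have : 0 ≤ 1 - e := by linarith
    positivity
  have hγtr : γ.trace = 1 := by
    rw [hγ, trace_add, trace_smul, trace_smul, hP, trace_vmv, hy, trace_one]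
    simp only [smul_eq_mul, Complex.ofReal_one, mul_one]
    have : ((e / ce) * d + ((d : ℝ) - 1) * (1 - e) / ce : ℝ) = 1 := by
      field_simp
      ring
    calc ((e / ce : ℝ) : ℂ) * (Fintype.card (Fin d) : ℂ)
          + ((((d : ℝ) - 1) * (1 - e) / ce : ℝ) : ℂ)
        = (((e / ce) * d + ((d : ℝ) - 1) * (1 - e) / ce : ℝ) : ℂ) := by
          push_cast [Fintype.card_fin]; ring
      _ = 1 := by rw [this]; norm_num
  have key : (1 + s)⁻¹ • ((((d : ℂ) - 1 + (e : ℝ))⁻¹) •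
      (1 - ((1 - e : ℝ) : ℂ) • P) + s • γ) = ((d : ℂ))⁻¹ • (1 : Matrix (Fin d) (Fin d) ℂ) := by
    have hdne : ((d : ℝ) - 1) ≠ 0 := by linarith
    have h1s : (1 : ℝ) + s ≠ 0 := by positivity
    have hceC : ((d : ℂ) - 1 + (e : ℝ)) ≠ 0 := by
      have : ((d : ℂ) - 1 + (e : ℝ)) = ((ce : ℝ) : ℂ) := by rw [hcedef]; push_cast; ring
      rw [this]
      exact Complex.ofReal_ne_zero.mpr hce.ne'
    have hdne : ((d : ℝ) - 1) ≠ 0 := by linarith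
    have hdC : ((d : ℂ) - 1) ≠ 0 := by
      have : ((d : ℂ) - 1) = (((d : ℝ) - 1 : ℝ) : ℂ) := by push_cast; ring
      rw [this]; exact Complex.ofReal_ne_zero.mpr hdne
    have hdC' : ((d : ℂ)) ≠ 0 := Nat.cast_ne_zero.mpr (by omega)
    ext i j
    simp only [hγ, hP, Matrix.smul_apply, Matrix.add_apply, Matrix.sub_apply,
      Matrix.one_apply, smul_eq_mul, Complex.real_smul]
    rw [hsdef, hcedef]
    by_cases hij : i = j <;> simp only [hij, if_true, if_false] <;> push_cast <;>
      field_simp <;> ring_nf <;> field_simp <;> ring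
  refine csInf_le ⟨0, fun x hx => hx.1⟩ ?_
  exact ⟨hs, γ, ⟨hγpsd, hγtr⟩, by rw [key]; exact hmm⟩
end

section
/- (Theorem 3, finite temperature.) Let Y be a d×d positive semidefinite matrix. Let σ_in be a pure density matrix (σ_in = φ φ† for some unit vector φ ∈ ℂ^d) with Re Tr[Y σ_in] ≤ 1, let ω be a density matrix with Re Tr[Y ω] ≤ 1 (the output of a free, resource-non-generating operation on σ_in), and let ρ_out be a density matrix with R := Re Tr[Y ρ_out] − 1 > 0 (the resourceful output state). Fix β > 0 and λ > 0 with λ·β·R > S(ρ_out), and set H = λ·Y. Then (F_H(ω) − F_H(σ_in)) · (λ·R − β⁻¹·S(ρ_out)) ≤ λ · (F_H(ρ_out) − F_H(σ_in)). (Equivalently, the relative work cost of producing the free output ω instead of the resourceful output ρ_out is at most 1/(R − λ⁻¹β⁻¹ S(ρ_out)).) -/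
open Matrix ComplexOrder

lemma trace_eq_sum_eig {n : Type*} [Fintype n] [DecidableEq n] {A : Matrix n n ℂ}
    (hA : A.IsHermitian) : A.trace = ∑ i, (hA.eigenvalues i : ℂ) := by
  nth_rewrite 1 [hA.spectral_theorem]
  rw [Unitary.conjStarAlgAut_apply, Matrix.trace_mul_comm, ← mul_assoc, Unitary.coe_star_mul_self, one_mul, Matrix.trace_diagonal]
  simp

lemma vnEntropy_nonneg' {n : Type*} [Fintype n] [DecidableEq n] {ρ : Matrix n n ℂ}
    (h1 : ρ.PosSemidef) (h2 : ρ.trace = 1) : 0 ≤ vnEntropy ρ := by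
  rw [vnEntropy, dif_pos h1.1]
  have hsum : ∑ i, h1.1.eigenvalues i = 1 := by
    have := trace_eq_sum_eig h1.1
    rw [h2] at this
    exact_mod_cast this.symm
  apply Finset.sum_nonneg
  intro i _
  have hnn := h1.eigenvalues_nonneg i
  have hle : h1.1.eigenvalues i ≤ 1 := by
    rw [← hsum]
    exact Finset.single_le_sum (f := h1.1.eigenvalues) (fun j _ => h1.eigenvalues_nonneg j)
      (Finset.mem_univ i)
  have := Real.log_nonpos hnn hle
  nlinarith

lemma eig_idem {n : Type*} [Fintype n] [DecidableEq n] {A : Matrix n n ℂ}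
    (hA : A.IsHermitian) (hidem : A * A = A) (i : n) :
    hA.eigenvalues i = 0 ∨ hA.eigenvalues i = 1 := by
  have hv := hA.mulVec_eigenvectorBasis i
  have h2 : A *ᵥ (A *ᵥ ⇑(hA.eigenvectorBasis i)) =
      (hA.eigenvalues i * hA.eigenvalues i) • ⇑(hA.eigenvectorBasis i) := by
    rw [hv, Matrix.mulVec_smul, hv, smul_smul]
  rw [Matrix.mulVec_mulVec, hidem, hv] at h2
  have hne : ⇑(hA.eigenvectorBasis i) ≠ 0 := by
    intro h
    apply hA.eigenvectorBasis.orthonormal.ne_zero i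
    ext j
    exact congrFun h j
  have h0 : (hA.eigenvalues i - hA.eigenvalues i * hA.eigenvalues i) •
      ⇑(hA.eigenvectorBasis i) = 0 := by
    rw [sub_smul, h2, sub_self]
  rcases smul_eq_zero.mp h0 with h | h
  · have : hA.eigenvalues i * (1 - hA.eigenvalues i) = 0 := by ring_nf; linarith [h]
    rcases mul_eq_zero.mp this with h' | h'
    · exact Or.inl h'
    · exact Or.inr (by linarith)
  · exact absurd h hne

lemma vecMulVec_isHermitian {d : ℕ} (φ : Fin d → ℂ) : (vecMulVec φ (star φ)).IsHermitian := by
  ext i j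
  simp [Matrix.conjTranspose_apply, vecMulVec_apply, mul_comm]

lemma vecMulVec_idem {d : ℕ} (φ : Fin d → ℂ) (hφ : ∑ j, ‖φ j‖ ^ 2 = 1) :
    vecMulVec φ (star φ) * vecMulVec φ (star φ) = vecMulVec φ (star φ) := by
  ext i j
  simp only [Matrix.mul_apply, vecMulVec_apply, Pi.star_apply]
  have key : ∑ k, star (φ k) * φ k = 1 := by
    have : ∀ k, star (φ k) * φ k = ((‖φ k‖ ^ 2 : ℝ) : ℂ) := by
      intro k
      rw [Complex.star_def, ← Complex.normSq_eq_conj_mul_self, Complex.normSq_eq_norm_sq]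
    simp_rw [this, ← Complex.ofReal_sum, hφ, Complex.ofReal_one]
  calc ∑ k, φ i * star (φ k) * (φ k * star (φ j))
      = (φ i * star (φ j)) * ∑ k, star (φ k) * φ k := by rw [Finset.mul_sum]; congr 1; ext k; ring
    _ = φ i * star (φ j) := by rw [key, mul_one]

lemma vnEntropy_pure {d : ℕ} (φ : Fin d → ℂ) (hφ : ∑ j, ‖φ j‖ ^ 2 = 1) :
    vnEntropy (vecMulVec φ (star φ)) = 0 := by
  rw [vnEntropy, dif_pos (vecMulVec_isHermitian φ)]
  apply Finset.sum_eq_zero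
  intro i _
  rcases eig_idem (vecMulVec_isHermitian φ) (vecMulVec_idem φ hφ) i with h | h <;> simp [h]

lemma trace_Y_pure_nonneg {d : ℕ} (Y : Matrix (Fin d) (Fin d) ℂ) (hY : Y.PosSemidef)
    (φ : Fin d → ℂ) : 0 ≤ ((Y * vecMulVec φ (star φ)).trace).re := by
  have h := hY.dotProduct_mulVec_nonneg φ
  have heq : (Y * vecMulVec φ (star φ)).trace = dotProduct (star φ) (Y *ᵥ φ) := by
    simp only [Matrix.trace, Matrix.diag, Matrix.mul_apply, vecMulVec_apply,
      dotProduct, Matrix.mulVec, Pi.star_apply]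
    congr 1; ext i
    rw [Finset.mul_sum]
    congr 1; ext k
    ring
  rw [heq]
  exact (Complex.le_def.mp h).1

lemma freeEnergy_smul {d : ℕ} (β lam : ℝ) (Y ρ : Matrix (Fin d) (Fin d) ℂ) :
    freeEnergy β ((lam : ℂ) • Y) ρ = lam * ((Y * ρ).trace).re - β⁻¹ * vnEntropy ρ := by
  rw [freeEnergy, smul_mul_assoc, Matrix.trace_smul]
  congr 2
  simp [Complex.smul_re]

/-- Theorem 3, finite temperature: for a pure free input `σ_in = φφ†`, a free
output `ω`, and a resourceful output `ρ_out` with witness value `R > 0`, the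
work cost (with Hamiltonian `H = λY`) of producing the free output is at most
`1/(R − λ⁻¹β⁻¹S(ρ_out))` times that of producing the resourceful output,
stated in a cross-multiplied form. -/
theorem cost_of_resource_generation_finite_temperature {d : ℕ}
    (Y : Matrix (Fin d) (Fin d) ℂ) (hY : Y.PosSemidef)
    (φ : Fin d → ℂ) (hφ : ∑ j, ‖φ j‖ ^ 2 = 1)
    (hσin : ((Y * vecMulVec φ (star φ)).trace).re ≤ 1)
    (ω : Matrix (Fin d) (Fin d) ℂ) (hω : IsDensityMatrix ω)
    (hωY : ((Y * ω).trace).re ≤ 1)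
    (ρout : Matrix (Fin d) (Fin d) ℂ) (hρout : IsDensityMatrix ρout)
    (hR : 0 < ((Y * ρout).trace).re - 1)
    (β lam : ℝ) (hβ : 0 < β) (hlam : 0 < lam)
    (hcond : vnEntropy ρout < lam * β * (((Y * ρout).trace).re - 1)) :
    (freeEnergy β ((lam : ℂ) • Y) ω - freeEnergy β ((lam : ℂ) • Y) (vecMulVec φ (star φ))) *
        (lam * (((Y * ρout).trace).re - 1) - β⁻¹ * vnEntropy ρout) ≤
      lam * (freeEnergy β ((lam : ℂ) • Y) ρout -
        freeEnergy β ((lam : ℂ) • Y) (vecMulVec φ (star φ))) := by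
  rw [freeEnergy_smul, freeEnergy_smul, freeEnergy_smul, vnEntropy_pure φ hφ]
  set t := ((Y * vecMulVec φ (star φ)).trace).re with ht
  set w := ((Y * ω).trace).re with hw
  set r := ((Y * ρout).trace).re with hr
  set Sω := vnEntropy ω with hSω
  set Sρ := vnEntropy ρout with hSρ
  have ht0 : 0 ≤ t := trace_Y_pure_nonneg Y hY φ
  have hSω0 : 0 ≤ Sω := vnEntropy_nonneg' hω.1 hω.2
  have hβi : 0 < β⁻¹ := inv_pos.mpr hβ
  have ha : 0 < lam * (r - 1) - β⁻¹ * Sρ := by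
    have : β⁻¹ * Sρ < β⁻¹ * (lam * β * (r - 1)) := by
      exact mul_lt_mul_of_pos_left hcond hβi
    have hb : β⁻¹ * (lam * β * (r - 1)) = lam * (r - 1) := by
      field_simp
    linarith
  have hωle : lam * w - β⁻¹ * Sω - lam * t ≤ lam * (1 - t) := by
    have := mul_nonneg hβi.le hSω0
    nlinarith
  have h1 : (lam * w - β⁻¹ * Sω - lam * t) * (lam * (r - 1) - β⁻¹ * Sρ) ≤
      lam * (1 - t) * (lam * (r - 1) - β⁻¹ * Sρ) :=
    mul_le_mul_of_nonneg_right hωle ha.le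
  have h2 : lam * (1 - t) * (lam * (r - 1) - β⁻¹ * Sρ) ≤ lam * (lam * (r - 1) - β⁻¹ * Sρ) := by
    nlinarith [mul_nonneg (mul_nonneg hlam.le ht0) ha.le]
  have h3 : lam * (lam * (r - 1) - β⁻¹ * Sρ) ≤
      lam * (lam * r - β⁻¹ * Sρ - (lam * t - β⁻¹ * 0)) := by
    nlinarith [mul_nonneg hlam.le (mul_nonneg hlam.le (sub_nonneg.mpr hσin))]
  calc (lam * w - β⁻¹ * Sω - (lam * t - β⁻¹ * 0)) * (lam * (r - 1) - β⁻¹ * Sρ)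
      = (lam * w - β⁻¹ * Sω - lam * t) * (lam * (r - 1) - β⁻¹ * Sρ) := by ring
    _ ≤ lam * (1 - t) * (lam * (r - 1) - β⁻¹ * Sρ) := h1
    _ ≤ lam * (lam * (r - 1) - β⁻¹ * Sρ) := h2
    _ ≤ lam * (lam * r - β⁻¹ * Sρ - (lam * t - β⁻¹ * 0)) := h3
end

section
/- (Robustness of coherence of maximally coherent states.) Let d ≥ 1, let θ : {1,…,d} → ℝ, and let ψ ∈ ℂ^d be the unit vector with components ψ_j = e^{i θ_j}/√d. Let L_incoh be the set of all diagonal density matrices on ℂ^d (the incoherent states in the computational basis). Then the generalized robustness of coherence of the pure state ψ ψ† satisfies R_{L_incoh}(ψ ψ†) = d − 1. -/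
open Matrix ComplexOrder

/-- The robustness of coherence of a maximally coherent state
`ψ = (e^{iθ_1},…,e^{iθ_d})/√d`, relative to the set of diagonal (incoherent)
density matrices, equals `d − 1`. -/
theorem robustness_of_coherence_maximally_coherent {d : ℕ} (hd : 1 ≤ d)
    (θ : Fin d → ℝ) :
    robustness
        { σ : Matrix (Fin d) (Fin d) ℂ |
          IsDensityMatrix σ ∧ ∀ i j, i ≠ j → σ i j = 0 }
        (vecMulVec (fun j => Complex.exp (Complex.I * (θ j : ℂ)) / (Real.sqrt d : ℂ))
          (star fun j => Complex.exp (Complex.I * (θ j : ℂ)) / (Real.sqrt d : ℂ))) =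
      d - 1 := by
  have hd0 : (0:ℝ) < d := by exact_mod_cast hd
  have hd1R : (1:ℝ) ≤ d := by exact_mod_cast hd
  set L : Set (Matrix (Fin d) (Fin d) ℂ) :=
    { σ : Matrix (Fin d) (Fin d) ℂ |
      IsDensityMatrix σ ∧ ∀ i j, i ≠ j → σ i j = 0 } with hLdef
  set ψ : Fin d → ℂ := fun j => Complex.exp (Complex.I * (θ j : ℂ)) / (Real.sqrt d : ℂ)
    with hψdef
  set ρ : Matrix (Fin d) (Fin d) ℂ := vecMulVec ψ (star ψ) with hρdef
  -- basic scalar facts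
  have hsd : ((Real.sqrt d : ℝ) : ℂ) * ((Real.sqrt d : ℝ) : ℂ) = (d:ℂ) := by
    rw [← Complex.ofReal_mul, Real.mul_self_sqrt hd0.le]; norm_cast
  have hconj : ∀ j, star (ψ j) * ψ j = ((d:ℂ))⁻¹ := by
    intro j
    have hexp : star (Complex.exp (Complex.I * (θ j : ℂ))) *
        Complex.exp (Complex.I * (θ j : ℂ)) = 1 := by
      rw [Complex.star_def, ← Complex.exp_conj, ← Complex.exp_add]
      simp [Complex.conj_ofReal]
    show star (Complex.exp (Complex.I * (θ j : ℂ)) / (Real.sqrt d : ℂ)) *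
        (Complex.exp (Complex.I * (θ j : ℂ)) / (Real.sqrt d : ℂ)) = _
    rw [star_div₀, div_mul_div_comm, hexp, Complex.star_def, Complex.conj_ofReal, hsd, one_div]
  have hsum : ∑ j, star (ψ j) * ψ j = 1 := by
    simp only [hconj, Finset.sum_const, Finset.card_univ, Fintype.card_fin, nsmul_eq_mul]
    exact mul_inv_cancel₀ (Nat.cast_ne_zero.2 (by omega))
  -- basic matrix facts about ρ
  have hρ_apply : ∀ i j, ρ i j = ψ i * star (ψ j) := fun i j => rfl
  have hρψ : ρ *ᵥ ψ = ψ := by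
    funext i
    show ∑ j, ρ i j * ψ j = ψ i
    simp only [hρ_apply, mul_assoc, ← Finset.mul_sum, hsum, mul_one]
  have hρx : ∀ x : Fin d → ℂ, ρ *ᵥ x = (star ψ ⬝ᵥ x) • ψ := by
    intro x; funext i
    show ∑ j, ρ i j * x j = (∑ j, star (ψ j) * x j) • ψ i
    simp only [hρ_apply, mul_assoc, ← Finset.mul_sum, smul_eq_mul]
    exact mul_comm _ _
  have hdotx : ∀ x : Fin d → ℂ, star x ⬝ᵥ ψ = star (star ψ ⬝ᵥ x) := by
    intro x
    show ∑ j, star (x j) * ψ j = star (∑ j, star (ψ j) * x j)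
    rw [star_sum]
    exact Finset.sum_congr rfl fun j _ => by rw [star_mul', star_star]; exact mul_comm _ _
  have hdot : star ψ ⬝ᵥ ψ = 1 := hsum
  have hρ_herm : ρ.IsHermitian := by
    ext i j
    simp only [conjTranspose_apply, hρ_apply, star_mul', star_star]
    exact mul_comm _ _
  have hρ_psd : ρ.PosSemidef := by
    refine PosSemidef.of_dotProduct_mulVec_nonneg hρ_herm fun x => ?_
    rw [hρx x, dotProduct_smul, hdotx x, smul_eq_mul]
    exact mul_star_self_nonneg _
  have hρ_tr : ρ.trace = 1 := by
    have h2 : ∀ i, ψ i * star (ψ i) = ((d:ℂ))⁻¹ := fun i => by rw [mul_comm]; exact hconj i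
    simp only [Matrix.trace, Matrix.diag, hρ_apply, h2, Finset.sum_const, Finset.card_univ,
      Fintype.card_fin, nsmul_eq_mul]
    exact mul_inv_cancel₀ (Nat.cast_ne_zero.2 (by omega))
  -- evaluation of diagonal matrices on ψ
  have hdiagval : ∀ M : Matrix (Fin d) (Fin d) ℂ, (∀ i j, i ≠ j → M i j = 0) →
      star ψ ⬝ᵥ M *ᵥ ψ = ((d:ℂ))⁻¹ * M.trace := by
    intro M hM
    have h1 : ∀ i, (M *ᵥ ψ) i = M i i * ψ i := by
      intro i
      show ∑ j, M i j * ψ j = _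
      rw [Finset.sum_eq_single i (fun j _ hj => by rw [hM i j (Ne.symm hj), zero_mul])
        (fun h => absurd (Finset.mem_univ i) h)]
    show ∑ i, star (ψ i) * (M *ᵥ ψ) i = _
    simp only [h1]
    have h3 : ∀ i, star (ψ i) * (M i i * ψ i) = ((d:ℂ))⁻¹ * M i i := by
      intro i; rw [mul_comm (M i i), ← mul_assoc, hconj]
    simp only [h3, ← Finset.mul_sum]
    rfl
  -- the lower bound
  have hlb : ∀ s ∈ { s : ℝ | 0 ≤ s ∧ ∃ γ : Matrix (Fin d) (Fin d) ℂ, IsDensityMatrix γ ∧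
      (1 + s)⁻¹ • (ρ + s • γ) ∈ L }, (d:ℝ) - 1 ≤ s := by
    rintro s ⟨hs0, γ, ⟨hγpsd, hγtr⟩, ⟨⟨hσpsd, hσtr⟩, hσdiag⟩⟩
    set t := star ψ ⬝ᵥ γ *ᵥ ψ with htdef
    have ht0 : 0 ≤ t := hγpsd.dotProduct_mulVec_nonneg ψ
    have htre : 0 ≤ t.re := by
      rw [Complex.le_def] at ht0
      simpa using ht0.1
    have heval : star ψ ⬝ᵥ ((1 + s)⁻¹ • (ρ + s • γ)) *ᵥ ψ = ((d:ℂ))⁻¹ := by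
      rw [hdiagval _ hσdiag, hσtr, mul_one]
    rw [smul_mulVec, add_mulVec, smul_mulVec, dotProduct_smul, dotProduct_add,
      dotProduct_smul, hρψ, hdot, ← htdef] at heval
    have hre := congrArg Complex.re heval
    rw [show ((d:ℂ))⁻¹ = (((d:ℝ)⁻¹ : ℝ) : ℂ) by push_cast; ring] at hre
    simp only [Complex.smul_re, Complex.add_re, Complex.one_re, Complex.ofReal_re,
      smul_eq_mul] at hre
    have h1s : (0:ℝ) < 1 + s := by linarith
    have hkey : (1 + s * t.re) * d = 1 + s := by
      field_simp at hre
      linarith [hre]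
    nlinarith [mul_nonneg (mul_nonneg hd0.le hs0) htre]
  -- the membership
  have hmem : ((d:ℝ) - 1) ∈ { s : ℝ | 0 ≤ s ∧ ∃ γ : Matrix (Fin d) (Fin d) ℂ,
      IsDensityMatrix γ ∧ (1 + s)⁻¹ • (ρ + s • γ) ∈ L } := by
    by_cases hcase : d = 1
    · -- trivial case d = 1
      refine ⟨by linarith, ρ, ⟨hρ_psd, hρ_tr⟩, ?_⟩
      have h10 : (d:ℝ) - 1 = 0 := by rw [hcase]; norm_num
      rw [h10]
      simp only [zero_smul, add_zero, inv_one, one_smul]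
      refine ⟨⟨hρ_psd, hρ_tr⟩, fun i j hij => absurd ?_ hij⟩
      have hi := i.isLt; have hj := j.isLt
      exact Fin.ext (by omega)
    · -- main case d ≥ 2
      have hd2 : 2 ≤ d := by omega
      have hdm1 : (0:ℝ) < (d:ℝ) - 1 := by
        have : (2:ℝ) ≤ d := by exact_mod_cast hd2
        linarith
      have hdm1C : ((d:ℂ)) - 1 ≠ 0 := by
        intro h
        rw [show ((d:ℂ) - 1) = (((d:ℝ) - 1 : ℝ) : ℂ) by push_cast; ring] at h
        exact hdm1.ne' (by exact_mod_cast h)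
      -- ρ is an idempotent, so 1 - ρ is PSD
      have hρρ : ρ * ρ = ρ := by
        ext i j
        show ∑ k, ρ i k * ρ k j = ρ i j
        have h4 : ∀ k, ρ i k * ρ k j = (star (ψ k) * ψ k) * (ψ i * star (ψ j)) := by
          intro k; simp only [hρ_apply]; ring
        simp only [h4, ← Finset.sum_mul, hsum, one_mul]
        exact (hρ_apply i j).symm
      have hherm1ρ : (1 - ρ).IsHermitian := (isHermitian_one).sub hρ_herm
      have h1ρmul : (1 - ρ) * (1 - ρ) = 1 - ρ := by
        have h5 : (1 - ρ) * (1 - ρ) = 1 - ρ - ρ + ρ * ρ := by noncomm_ring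
        rw [h5, hρρ]; abel
      have h1ρ_psd : (1 - ρ).PosSemidef := by
        have h6 := posSemidef_conjTranspose_mul_self (1 - ρ)
        rwa [hherm1ρ, h1ρmul] at h6
      have h1ρ_tr : (1 - ρ).trace = (d:ℂ) - 1 := by
        rw [trace_sub, trace_one, hρ_tr]; simp
      -- the witness state γ
      set γ : Matrix (Fin d) (Fin d) ℂ :=
        (((d:ℝ) - 1)⁻¹) • ((1 : Matrix (Fin d) (Fin d) ℂ) - ρ) with hγdef
      have hγ_psd : γ.PosSemidef := by
        refine PosSemidef.of_dotProduct_mulVec_nonneg ?_ ?_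
        · show γᴴ = γ
          rw [hγdef, conjTranspose_smul, star_trivial, h1ρ_psd.1]
        · intro x
          rw [hγdef, smul_mulVec, dotProduct_smul, Complex.real_smul]
          exact mul_nonneg (by positivity) (h1ρ_psd.dotProduct_mulVec_nonneg x)
      have hcast : ((((d:ℝ) - 1)⁻¹ : ℝ) : ℂ) = ((d:ℂ) - 1)⁻¹ := by push_cast; ring
      have hγ_tr : γ.trace = 1 := by
        rw [hγdef, trace_smul, h1ρ_tr, Complex.real_smul, hcast, inv_mul_cancel₀ hdm1C]
      refine ⟨by linarith, γ, ⟨hγ_psd, hγ_tr⟩, ?_⟩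
      have hsmul : ((d:ℝ) - 1) • γ = 1 - ρ := by
        rw [hγdef, smul_smul, mul_inv_cancel₀ hdm1.ne', one_smul]
      have hsimp : (1 + ((d:ℝ) - 1))⁻¹ • (ρ + ((d:ℝ) - 1) • γ) =
          ((d:ℝ))⁻¹ • (1 : Matrix (Fin d) (Fin d) ℂ) := by
        rw [hsmul, show ρ + (1 - ρ) = (1 : Matrix (Fin d) (Fin d) ℂ) by abel,
          show (1 + ((d:ℝ) - 1)) = (d:ℝ) by ring]
      rw [hsimp]
      refine ⟨⟨PosSemidef.of_dotProduct_mulVec_nonneg ?_ ?_, ?_⟩, ?_⟩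
      · show _ᴴ = _
        rw [conjTranspose_smul, star_trivial, conjTranspose_one]
      · intro x
        rw [smul_mulVec, dotProduct_smul, Complex.real_smul]
        exact mul_nonneg (by positivity) (Matrix.PosSemidef.one.dotProduct_mulVec_nonneg x)
      · have hdne : ((d:ℂ)) ≠ 0 := Nat.cast_ne_zero.2 (by omega)
        rw [trace_smul, trace_one, Complex.real_smul, Fintype.card_fin]
        push_cast
        exact inv_mul_cancel₀ hdne
      · intro i j hij
        simp [Matrix.one_apply_ne hij]
  -- conclusion
  show robustness L ρ = (d:ℝ) - 1
  unfold robustness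
  exact le_antisymm (csInf_le ⟨(d:ℝ) - 1, fun s hs => hlb s hs⟩ hmem)
    (le_csInf ⟨_, hmem⟩ hlb)
end

section
/- (Robustness of coherence of N copies of the T state.) Let N ≥ 1 and let |T⟩ = (|0⟩ + e^{iπ/4}|1⟩)/√2 ∈ ℂ². Consider the N-fold tensor product state |T⟩^{⊗N} ∈ ℂ^{2^N} and let L_incoh be the set of all diagonal density matrices on ℂ^{2^N} (the incoherent states in the computational basis). Then the generalized robustness of coherence satisfies R_{L_incoh}((|T⟩⟨T|)^{⊗N}) = 2^N − 1. -/
open Matrix ComplexOrder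

/-- The single-qubit `T` state `|T⟩ = (|0⟩ + e^{iπ/4}|1⟩)/√2`. -/
noncomputable def Tket : Fin 2 → ℂ :=
  ![1 / (Real.sqrt 2 : ℂ), Complex.exp (Complex.I * (Real.pi / 4 : ℂ)) / (Real.sqrt 2 : ℂ)]

/-- The `N`-fold tensor power `(|T⟩⟨T|)^{⊗N}`, realized as a matrix indexed by
`Fin N → Fin 2` (the computational basis of `(ℂ²)^{⊗N} ≅ ℂ^{2^N}`), with entries
given by products of the entries of `|T⟩⟨T|`. -/
noncomputable def TstatePow (N : ℕ) : Matrix (Fin N → Fin 2) (Fin N → Fin 2) ℂ :=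
  Matrix.of fun f g => ∏ k : Fin N, (vecMulVec Tket (star Tket)) (f k) (g k)

lemma tket_norm (i : Fin 2) : (starRingEnd ℂ) (Tket i) * Tket i = 1/2 := by
  have h2 : (Real.sqrt 2 : ℂ) * (Real.sqrt 2 : ℂ) = 2 := by
    rw [← Complex.ofReal_mul, Real.mul_self_sqrt (by norm_num)]
    norm_num
  fin_cases i
  · show (starRingEnd ℂ) (1 / (Real.sqrt 2 : ℂ)) * (1 / (Real.sqrt 2 : ℂ)) = 1/2
    rw [map_div₀]
    simp only [_root_.map_one, Complex.conj_ofReal]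
    rw [div_mul_div_comm, h2]
    norm_num
  · show (starRingEnd ℂ) (Complex.exp (Complex.I * (Real.pi / 4 : ℂ)) / (Real.sqrt 2 : ℂ)) *
      (Complex.exp (Complex.I * (Real.pi / 4 : ℂ)) / (Real.sqrt 2 : ℂ)) = 1/2
    rw [map_div₀, Complex.conj_ofReal]
    have h1 : (starRingEnd ℂ) (Complex.exp (Complex.I * (Real.pi / 4 : ℂ))) *
        Complex.exp (Complex.I * (Real.pi / 4 : ℂ)) = 1 := by
      rw [← Complex.exp_conj, ← Complex.exp_add]
      have : (starRingEnd ℂ) (Complex.I * ((Real.pi : ℂ) / 4)) = -(Complex.I * ((Real.pi : ℂ) / 4)) := by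
        rw [_root_.map_mul, Complex.conj_I, map_div₀, Complex.conj_ofReal,
          show (starRingEnd ℂ) 4 = 4 from Complex.conj_ofNat 4]
        ring
      rw [this, neg_add_cancel, Complex.exp_zero]
    rw [div_mul_div_comm, h1, h2]

noncomputable def psiN (N : ℕ) : (Fin N → Fin 2) → ℂ := fun f => ∏ k, Tket (f k)

lemma psi_norm (N : ℕ) (f : Fin N → Fin 2) :
    (starRingEnd ℂ) (psiN N f) * psiN N f = (1/2 : ℂ) ^ N := by
  unfold psiN
  rw [map_prod, ← Finset.prod_mul_distrib]
  simp_rw [tket_norm]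
  simp

lemma card_idx (N : ℕ) : Fintype.card (Fin N → Fin 2) = 2 ^ N := by
  simp [Fintype.card_fun]

lemma sum_psi (N : ℕ) : ∑ f : Fin N → Fin 2, (starRingEnd ℂ) (psiN N f) * psiN N f = 1 := by
  simp_rw [psi_norm]
  rw [Finset.sum_const, Finset.card_univ, card_idx, nsmul_eq_mul]
  push_cast
  rw [← mul_pow]
  norm_num

lemma Tstate_apply (N : ℕ) (f g : Fin N → Fin 2) :
    TstatePow N f g = psiN N f * (starRingEnd ℂ) (psiN N g) := by
  unfold TstatePow psiN
  simp only [Matrix.of_apply, vecMulVec_apply, Pi.star_apply, Complex.star_def]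
  rw [Finset.prod_mul_distrib, map_prod]

lemma Tstate_trace (N : ℕ) : (TstatePow N).trace = 1 := by
  have h : ∀ f, (TstatePow N).diag f = (starRingEnd ℂ) (psiN N f) * psiN N f := by
    intro f; rw [Matrix.diag_apply, Tstate_apply]; ring
  rw [Matrix.trace]
  simp_rw [h]
  exact sum_psi N

lemma Tstate_mulVec (N : ℕ) : (TstatePow N) *ᵥ psiN N = psiN N := by
  funext f
  simp only [Matrix.mulVec, dotProduct, Tstate_apply]
  simp_rw [mul_assoc]
  rw [← Finset.mul_sum, sum_psi, mul_one]

lemma Q_rho (N : ℕ) : star (psiN N) ⬝ᵥ (TstatePow N) *ᵥ psiN N = 1 := by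
  rw [Tstate_mulVec]
  simpa [dotProduct, Pi.star_apply, Complex.star_def] using sum_psi N

lemma Q_diag (N : ℕ) (A : Matrix (Fin N → Fin 2) (Fin N → Fin 2) ℂ)
    (hdiag : ∀ f g, f ≠ g → A f g = 0) :
    star (psiN N) ⬝ᵥ A *ᵥ psiN N = A.trace * (1/2 : ℂ) ^ N := by
  simp only [dotProduct, Matrix.mulVec, Pi.star_apply, Complex.star_def]
  have : ∀ f : Fin N → Fin 2,
      (∑ g, A f g * psiN N g) = A f f * psiN N f := by
    intro f
    rw [Finset.sum_eq_single f]
    · intro g _ hg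
      rw [hdiag f g (Ne.symm hg), zero_mul]
    · simp
  simp_rw [this]
  rw [Matrix.trace, Finset.sum_mul]
  congr 1
  funext f
  rw [Matrix.diag_apply]
  rw [show (starRingEnd ℂ) (psiN N f) * (A f f * psiN N f)
      = A f f * ((starRingEnd ℂ) (psiN N f) * psiN N f) by ring, psi_norm]

lemma rho_mul_rho (N : ℕ) : TstatePow N * TstatePow N = TstatePow N := by
  ext f g
  rw [Matrix.mul_apply]
  simp_rw [Tstate_apply]
  have h : ∀ x, psiN N f * (starRingEnd ℂ) (psiN N x) * (psiN N x * (starRingEnd ℂ) (psiN N g))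
      = psiN N f * (starRingEnd ℂ) (psiN N g) * ((starRingEnd ℂ) (psiN N x) * psiN N x) :=
    fun x => by ring
  simp_rw [h]
  rw [← Finset.mul_sum, sum_psi, mul_one]

lemma rho_herm (N : ℕ) : (TstatePow N)ᴴ = TstatePow N := by
  ext f g
  rw [Matrix.conjTranspose_apply, Tstate_apply, Tstate_apply]
  simp [mul_comm]

lemma one_sub_rho_psd (N : ℕ) : (1 - TstatePow N).PosSemidef := by
  have key : (1 - TstatePow N) = (1 - TstatePow N)ᴴ * (1 - TstatePow N) := by
    rw [Matrix.conjTranspose_sub, Matrix.conjTranspose_one, rho_herm,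
      sub_mul, one_mul, mul_sub, mul_one, rho_mul_rho]
    abel
  rw [key]
  exact Matrix.posSemidef_conjTranspose_mul_self _

lemma smul_psd {n : Type*} [Fintype n] (r : ℝ) (hr : 0 ≤ r)
    (A : Matrix n n ℂ) (hA : A.PosSemidef) : (r • A).PosSemidef := by
  refine Matrix.posSemidef_iff_dotProduct_mulVec.mpr ⟨?_, ?_⟩
  · rw [Matrix.IsHermitian, Matrix.conjTranspose_smul, star_trivial, hA.1]
  · intro x
    rw [Matrix.smul_mulVec, dotProduct_smul]
    have hq := hA.dotProduct_mulVec_nonneg x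
    rw [Complex.nonneg_iff] at hq ⊢
    rw [Complex.real_smul]
    constructor
    · rw [Complex.mul_re, Complex.ofReal_re, Complex.ofReal_im]
      simpa using mul_nonneg hr hq.1
    · rw [Complex.mul_im, Complex.ofReal_re, Complex.ofReal_im, ← hq.2]
      ring

/-- The robustness of coherence (relative to diagonal density matrices in the
computational basis) of `N` copies of the `T` state is `2^N − 1`. -/
theorem robustness_of_coherence_T_states (N : ℕ) (hN : 1 ≤ N) :
    robustness
        { σ : Matrix (Fin N → Fin 2) (Fin N → Fin 2) ℂ |
          IsDensityMatrix σ ∧ ∀ f g, f ≠ g → σ f g = 0 }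
        (TstatePow N) =
      2 ^ N - 1 := by
  have hpow : (0:ℝ) < 2 ^ N := by positivity
  have h2N : (1:ℝ) < 2 ^ N := by
    have h : (2:ℝ) ^ 1 ≤ 2 ^ N := pow_le_pow_right₀ (by norm_num) hN
    nlinarith
  have hp : ((1/2:ℝ)) ^ N * 2 ^ N = 1 := by rw [← mul_pow]; norm_num
  have hs₀pos : (0:ℝ) < 2 ^ N - 1 := by linarith
  have hne : (2:ℝ) ^ N - 1 ≠ 0 := ne_of_gt hs₀pos
  set ρ := TstatePow N with hρ
  set L : Set (Matrix (Fin N → Fin 2) (Fin N → Fin 2) ℂ) :=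
    { σ | IsDensityMatrix σ ∧ ∀ f g, f ≠ g → σ f g = 0 } with hL
  -- achievability
  have hmem : (2 ^ N - 1 : ℝ) ∈ { s : ℝ | 0 ≤ s ∧ ∃ γ, IsDensityMatrix γ ∧
      (1 + s)⁻¹ • (ρ + s • γ) ∈ L } := by
    refine ⟨le_of_lt hs₀pos, ((2:ℝ) ^ N - 1)⁻¹ • (1 - ρ), ⟨?_, ?_⟩, ?_⟩
    · exact smul_psd _ (le_of_lt (inv_pos.mpr hs₀pos)) _ (one_sub_rho_psd N)
    · rw [Matrix.trace_smul, Matrix.trace_sub, Matrix.trace_one, hρ, Tstate_trace, card_idx,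
        Complex.real_smul]
      push_cast
      exact inv_mul_cancel₀ (by exact_mod_cast hne)
    · have hsg : (2 ^ N - 1 : ℝ) • (((2:ℝ) ^ N - 1)⁻¹ • (1 - ρ)) = 1 - ρ := by
        rw [smul_smul, mul_inv_cancel₀ hne, one_smul]
      have hsum : ρ + (1 - ρ) = 1 := by abel
      rw [hsg, hsum]
      refine ⟨⟨?_, ?_⟩, ?_⟩
      · refine smul_psd _ (by positivity) _ ?_
        have : (1 : Matrix (Fin N → Fin 2) (Fin N → Fin 2) ℂ)
            = (1 : Matrix (Fin N → Fin 2) (Fin N → Fin 2) ℂ)ᴴ * 1 := by simp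
        rw [this]; exact Matrix.posSemidef_conjTranspose_mul_self _
      · rw [Matrix.trace_smul, Matrix.trace_one, card_idx, Complex.real_smul]
        have : (1:ℝ) + (2 ^ N - 1) = 2 ^ N := by ring
        rw [this]
        push_cast
        exact inv_mul_cancel₀ (by positivity)
      · intro f g hfg
        rw [Matrix.smul_apply, Matrix.one_apply_ne hfg, smul_zero]
  -- lower bound
  have hlb : ∀ s ∈ { s : ℝ | 0 ≤ s ∧ ∃ γ, IsDensityMatrix γ ∧
      (1 + s)⁻¹ • (ρ + s • γ) ∈ L }, (2 ^ N - 1 : ℝ) ≤ s := by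
    rintro s ⟨hs0, γ, ⟨hγpsd, _⟩, ⟨⟨_, hσtr⟩, hσdiag⟩⟩
    set σ := (1 + s)⁻¹ • (ρ + s • γ) with hσ
    have h1s : (0:ℝ) < 1 + s := by linarith
    have E1 : star (psiN N) ⬝ᵥ σ *ᵥ psiN N = (1/2 : ℂ) ^ N := by
      rw [Q_diag N σ hσdiag, hσtr, one_mul]
    have E2 : star (psiN N) ⬝ᵥ σ *ᵥ psiN N
        = (1 + s)⁻¹ • ((1:ℂ) + s • (star (psiN N) ⬝ᵥ γ *ᵥ psiN N)) := by
      rw [hσ, Matrix.smul_mulVec, dotProduct_smul, Matrix.add_mulVec,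
        dotProduct_add, Matrix.smul_mulVec, dotProduct_smul, hρ, Q_rho]
    set q := star (psiN N) ⬝ᵥ γ *ᵥ psiN N with hq
    have key : (1 + s) • ((1/2 : ℂ) ^ N) = (1:ℂ) + s • q := by
      rw [← E1, E2, smul_smul, mul_inv_cancel₀ (ne_of_gt h1s), one_smul]
    have hqre : 0 ≤ q.re := ((Complex.nonneg_iff).mp (hγpsd.dotProduct_mulVec_nonneg (psiN N))).1
    have keyre : (1 + s) * (1/2:ℝ) ^ N = 1 + s * q.re := by
      have hc : ((1/2:ℂ)) ^ N = (((1/2:ℝ) ^ N : ℝ) : ℂ) := by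
        rw [Complex.ofReal_pow, Complex.ofReal_div, Complex.ofReal_one, Complex.ofReal_ofNat]
      rw [hc, Complex.real_smul, Complex.real_smul, ← Complex.ofReal_mul] at key
      have h := congrArg Complex.re key
      rw [Complex.ofReal_re, Complex.add_re, Complex.one_re, Complex.mul_re,
        Complex.ofReal_re, Complex.ofReal_im] at h
      linear_combination h
    have h1 : (1:ℝ) ≤ (1 + s) * (1/2:ℝ) ^ N := by nlinarith
    have h2 : (2:ℝ) ^ N ≤ 1 + s := by
      have h3 := mul_le_mul_of_nonneg_right h1 (le_of_lt hpow)
      calc (2:ℝ) ^ N = 1 * 2 ^ N := (one_mul _).symm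
        _ ≤ (1 + s) * (1/2:ℝ) ^ N * 2 ^ N := h3
        _ = 1 + s := by rw [mul_assoc, hp, mul_one]
    linarith
  rw [robustness]
  exact le_antisymm (csInf_le ⟨0, fun x hx => hx.1⟩ hmem)
    (le_csInf ⟨_, hmem⟩ hlb)
end
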